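/- Suppose the fully discrete gel scheme satisfies the discrete energy identity J_h^{ℓ+1} + ΔtΣ_{n=0}^ℓ[κ‖∇p_h^{n+1}‖² + (Δt/2)(β‖d_t∇u_h^{n+1}‖² + α‖d_t q_h^n‖²)] = J_h^0 − κ(Δt)²Σ_{n=0}^ℓ(d_t∇p̃_h^{n+1}, ∇p_h^{n+1}), that the inverse inequality ‖∇φ_h‖_{L²} ≤ c₀h^{-1}‖φ_h‖_{L²} holds on the finite element space, and that the inf-sup condition gives ‖p̃_h^{n+1} − p̃_h^n‖_{L²} ≤ β₀^{-1}βΔt‖d_t∇u_h^{n+1}‖_{L²}. Then, provided Δt ≤ β₀²h²/(4κβc₀²), the discrete energy inequality holds: J_h^{ℓ+1} + ΔtΣ_{n=0}^ℓ[(κ/2)‖∇p_h^{n+1}‖² + (Δt/4)(β‖d_t∇u_h^{n+1}‖² + α‖d_t q_h^n‖²)] ≤ J_h^0. -/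

import Mathlib

open scoped RealInnerProductSpace

set_option maxHeartbeats 1000000 in
/-- discrete energy inequality for the fully discrete gel scheme under
the mesh condition `Δt ≤ β₀²h²/(4κβc₀²)`.  Given the discrete energy identity
(hypothesis `hEnergy`, with `p_h^{n+1} = p̃^{n+1} + α q^n` and the convention
`q^{-1} = q^0` via truncated subtraction), the inverse inequality
`‖∇φ_h‖ ≤ c₀ h⁻¹ ‖φ_h‖_{L²}` (`hinv`), and the inf-sup bound
`‖p̃^{n+1} − p̃^n‖_{L²} ≤ β₀⁻¹ β Δt ‖d_t ∇u^{n+1}‖` (`hps`), one has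
`J^{ℓ+1} + ΔtΣ_{n=0}^ℓ[(κ/2)‖∇p^{n+1}‖² + (Δt/4)(β‖d_t∇u^{n+1}‖² + α‖d_t q^n‖²)]
≤ J^0`. -/
theorem gel_fully_discrete_energy_inequality
    {L2 Vh Mh GV GM : Type*}
    [NormedAddCommGroup L2] [InnerProductSpace ℝ L2]
    [NormedAddCommGroup Vh] [InnerProductSpace ℝ Vh]
    [NormedAddCommGroup Mh] [InnerProductSpace ℝ Mh]
    [NormedAddCommGroup GV] [InnerProductSpace ℝ GV]
    [NormedAddCommGroup GM] [InnerProductSpace ℝ GM]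
    (α β κ Δt h c₀ β₀ : ℝ)
    (hα : 0 < α) (hβ : 0 < β) (hκ : 0 < κ) (hΔt : 0 < Δt)
    (hh : 0 < h) (hc₀ : 0 < c₀) (hβ₀ : 0 < β₀)
    (gradV : Vh →L[ℝ] GV) (emb : Mh →L[ℝ] L2) (gradM : Mh →L[ℝ] GM)
    (u : ℕ → Vh) (pt : ℕ → Mh) (q : ℕ → Mh) (J : ℕ → ℝ)
    -- discrete energy identity (Lemma 3.3 of the paper), assumed available:
    (hEnergy : ∀ ℓ : ℕ,
      J (ℓ+1) + Δt * ∑ n ∈ Finset.range (ℓ+1),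
        (κ * ‖gradM (pt (n+1) + α • q n)‖^2
          + (Δt/2) * (β * ‖Δt⁻¹ • (gradV (u (n+1)) - gradV (u n))‖^2
            + α * ‖Δt⁻¹ • (emb (q n) - emb (q (n-1)))‖^2))
      = J 0 - κ * Δt^2 * ∑ n ∈ Finset.range (ℓ+1),
          ⟪Δt⁻¹ • (gradM (pt (n+1)) - gradM (pt n)), gradM (pt (n+1) + α • q n)⟫)
    -- inverse inequality on the finite element space:
    (hinv : ∀ m : Mh, ‖gradM m‖ ≤ c₀ * h⁻¹ * ‖emb m‖)
    -- inf-sup bound on the pressure increment: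
    (hps : ∀ n : ℕ, ‖emb (pt (n+1) - pt n)‖
      ≤ β₀⁻¹ * β * Δt * ‖Δt⁻¹ • (gradV (u (n+1)) - gradV (u n))‖)
    -- mesh constraint:
    (hmesh : Δt ≤ β₀^2 * h^2 / (4 * κ * β * c₀^2)) :
    ∀ ℓ : ℕ,
      J (ℓ+1) + Δt * ∑ n ∈ Finset.range (ℓ+1),
        ((κ/2) * ‖gradM (pt (n+1) + α • q n)‖^2
          + (Δt/4) * (β * ‖Δt⁻¹ • (gradV (u (n+1)) - gradV (u n))‖^2
            + α * ‖Δt⁻¹ • (emb (q n) - emb (q (n-1)))‖^2))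
      ≤ J 0 := by
  intro ℓ
  have hc_pos : 0 < c₀ * h⁻¹ * β₀⁻¹ * β := by positivity
  have hc2 : κ * Δt * (c₀ * h⁻¹ * β₀⁻¹ * β)^2 ≤ β / 4 := by
    have h1 : κ * Δt * (c₀ * h⁻¹ * β₀⁻¹ * β)^2
        ≤ κ * (β₀^2 * h^2 / (4 * κ * β * c₀^2)) * (c₀ * h⁻¹ * β₀⁻¹ * β)^2 := by
      have := mul_le_mul_of_nonneg_right
        (mul_le_mul_of_nonneg_left hmesh hκ.le) (sq_nonneg (c₀ * h⁻¹ * β₀⁻¹ * β))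
      linarith [this]
    have h2 : κ * (β₀^2 * h^2 / (4 * κ * β * c₀^2)) * (c₀ * h⁻¹ * β₀⁻¹ * β)^2 = β / 4 := by
      field_simp
    linarith
  have key : ∀ n : ℕ,
      0 ≤ κ * Δt^2 * ⟪Δt⁻¹ • (gradM (pt (n+1)) - gradM (pt n)), gradM (pt (n+1) + α • q n)⟫
        + Δt * ((κ/2) * ‖gradM (pt (n+1) + α • q n)‖^2
          + (Δt/4) * (β * ‖Δt⁻¹ • (gradV (u (n+1)) - gradV (u n))‖^2
            + α * ‖Δt⁻¹ • (emb (q n) - emb (q (n-1)))‖^2)) := by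
    intro n
    set Y : ℝ := ‖gradM (pt (n+1) + α • q n)‖ with hYdef
    set D : ℝ := ‖Δt⁻¹ • (gradV (u (n+1)) - gradV (u n))‖ with hDdef
    have hXnorm : ‖Δt⁻¹ • (gradM (pt (n+1)) - gradM (pt n))‖ ≤ c₀ * h⁻¹ * β₀⁻¹ * β * D := by
      have h1 : ‖Δt⁻¹ • (gradM (pt (n+1)) - gradM (pt n))‖
          = Δt⁻¹ * ‖gradM (pt (n+1) - pt n)‖ := by
        rw [← map_sub, norm_smul, Real.norm_eq_abs, abs_of_pos (inv_pos.mpr hΔt)]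
      have h2 : ‖gradM (pt (n+1) - pt n)‖ ≤ c₀ * h⁻¹ * (β₀⁻¹ * β * Δt * D) := by
        calc ‖gradM (pt (n+1) - pt n)‖ ≤ c₀ * h⁻¹ * ‖emb (pt (n+1) - pt n)‖ := hinv _
          _ ≤ c₀ * h⁻¹ * (β₀⁻¹ * β * Δt * D) :=
              mul_le_mul_of_nonneg_left (hps n) (by positivity)
      calc ‖Δt⁻¹ • (gradM (pt (n+1)) - gradM (pt n))‖
          = Δt⁻¹ * ‖gradM (pt (n+1) - pt n)‖ := h1
        _ ≤ Δt⁻¹ * (c₀ * h⁻¹ * (β₀⁻¹ * β * Δt * D)) :=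
            mul_le_mul_of_nonneg_left h2 (by positivity)
        _ = c₀ * h⁻¹ * β₀⁻¹ * β * D := by field_simp
    have hYnn : 0 ≤ Y := norm_nonneg _
    have hDnn : 0 ≤ D := norm_nonneg _
    have habs := abs_real_inner_le_norm
      (Δt⁻¹ • (gradM (pt (n+1)) - gradM (pt n))) (gradM (pt (n+1) + α • q n))
    have hna := neg_abs_le
      (⟪Δt⁻¹ • (gradM (pt (n+1)) - gradM (pt n)), gradM (pt (n+1) + α • q n)⟫ : ℝ)
    have hXnn : 0 ≤ ‖Δt⁻¹ • (gradM (pt (n+1)) - gradM (pt n))‖ := norm_nonneg _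
    have hlow : -(c₀ * h⁻¹ * β₀⁻¹ * β * D * Y)
        ≤ ⟪Δt⁻¹ • (gradM (pt (n+1)) - gradM (pt n)), gradM (pt (n+1) + α • q n)⟫ := by
      have hh1 : ‖Δt⁻¹ • (gradM (pt (n+1)) - gradM (pt n))‖ * Y
          ≤ c₀ * h⁻¹ * β₀⁻¹ * β * D * Y := mul_le_mul_of_nonneg_right hXnorm hYnn
      rw [← hYdef] at habs
      linarith
    have hQnn : 0 ≤ α * ‖Δt⁻¹ • (emb (q n) - emb (q (n-1)))‖^2 := by positivity
    have hmain : κ * Δt^2 * (c₀ * h⁻¹ * β₀⁻¹ * β * D * Y)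
        ≤ Δt * ((κ/2) * Y^2 + (Δt/4) * (β * D^2)) := by
      nlinarith [mul_nonneg (by positivity : (0:ℝ) ≤ κ * Δt / 2)
          (sq_nonneg (Y - Δt * (c₀ * h⁻¹ * β₀⁻¹ * β) * D)),
        mul_le_mul_of_nonneg_right hc2
          (by positivity : (0:ℝ) ≤ Δt^2 * D^2),
        mul_nonneg (mul_nonneg hβ.le (by positivity : (0:ℝ) ≤ Δt^2)) (sq_nonneg D)]
    have hpos : (0:ℝ) ≤ κ * Δt^2 := by positivity
    have h7 := mul_le_mul_of_nonneg_left hlow hpos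
    have hexp : Δt * ((κ/2) * Y^2
          + (Δt/4) * (β * D^2 + α * ‖Δt⁻¹ • (emb (q n) - emb (q (n-1)))‖^2))
        = Δt * ((κ/2) * Y^2 + (Δt/4) * (β * D^2))
          + Δt * ((Δt/4) * (α * ‖Δt⁻¹ • (emb (q n) - emb (q (n-1)))‖^2)) := by ring
    have h8 : (0:ℝ) ≤ Δt * ((Δt/4) * (α * ‖Δt⁻¹ • (emb (q n) - emb (q (n-1)))‖^2)) := by
      positivity
    linarith [h7, hmain, hexp, h8]
  have hE := hEnergy ℓ
  have hsum2 : ∑ n ∈ Finset.range (ℓ+1),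
      (κ * ‖gradM (pt (n+1) + α • q n)‖^2
        + (Δt/2) * (β * ‖Δt⁻¹ • (gradV (u (n+1)) - gradV (u n))‖^2
          + α * ‖Δt⁻¹ • (emb (q n) - emb (q (n-1)))‖^2))
      = 2 * ∑ n ∈ Finset.range (ℓ+1),
        ((κ/2) * ‖gradM (pt (n+1) + α • q n)‖^2
          + (Δt/4) * (β * ‖Δt⁻¹ • (gradV (u (n+1)) - gradV (u n))‖^2
            + α * ‖Δt⁻¹ • (emb (q n) - emb (q (n-1)))‖^2)) := by
    rw [Finset.mul_sum]
    exact Finset.sum_congr rfl fun n _ => by ring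
  have hbound : 0 ≤ κ * Δt^2 * (∑ n ∈ Finset.range (ℓ+1),
        ⟪Δt⁻¹ • (gradM (pt (n+1)) - gradM (pt n)), gradM (pt (n+1) + α • q n)⟫)
      + Δt * ∑ n ∈ Finset.range (ℓ+1),
        ((κ/2) * ‖gradM (pt (n+1) + α • q n)‖^2
          + (Δt/4) * (β * ‖Δt⁻¹ • (gradV (u (n+1)) - gradV (u n))‖^2
            + α * ‖Δt⁻¹ • (emb (q n) - emb (q (n-1)))‖^2)) := by
    rw [Finset.mul_sum, Finset.mul_sum, ← Finset.sum_add_distrib]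
    exact Finset.sum_nonneg fun n _ => key n
  have h9 : Δt * ∑ n ∈ Finset.range (ℓ+1),
      (κ * ‖gradM (pt (n+1) + α • q n)‖^2
        + (Δt/2) * (β * ‖Δt⁻¹ • (gradV (u (n+1)) - gradV (u n))‖^2
          + α * ‖Δt⁻¹ • (emb (q n) - emb (q (n-1)))‖^2))
      = 2 * (Δt * ∑ n ∈ Finset.range (ℓ+1),
        ((κ/2) * ‖gradM (pt (n+1) + α • q n)‖^2
          + (Δt/4) * (β * ‖Δt⁻¹ • (gradV (u (n+1)) - gradV (u n))‖^2
            + α * ‖Δt⁻¹ • (emb (q n) - emb (q (n-1)))‖^2))) := by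
    rw [hsum2]; ring
  linarith [hE, h9, hbound]
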